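/- arXiv:1211.2284 — 2 statements merged into one kernel-verified Lean document; each statement's English description precedes it below -/
import Mathlib

section
/- The function x ↦ x e^{x^2/2} (1 - Φ(x)) is monotonically increasing on (0, ∞), where Φ is the standard normal CDF. -/
open Real

/-- The standard normal cumulative distribution function. -/
noncomputable def stdNormalCDF (x : ℝ) : ℝ :=
  ∫ t in Set.Iic x, Real.exp (-t ^ 2 / 2) / Real.sqrt (2 * Real.pi)

open MeasureTheory Set

lemma gauss_integrable : Integrable (fun t : ℝ => Real.exp (-t ^ 2 / 2) / Real.sqrt (2 * Real.pi)) := by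
  have : Integrable (fun t : ℝ => Real.exp (-(1/2 : ℝ) * t ^ 2)) := integrable_exp_neg_mul_sq (by norm_num)
  have := this.div_const (Real.sqrt (2 * Real.pi))
  convert this using 2 with t
  ring_nf

lemma gauss_total : ∫ t : ℝ, Real.exp (-t ^ 2 / 2) / Real.sqrt (2 * Real.pi) = 1 := by
  have h : ∫ t : ℝ, Real.exp (-(1/2 : ℝ) * t ^ 2) = Real.sqrt (π / (1/2)) := integral_gaussian (1/2)
  have h2 : ∫ t : ℝ, Real.exp (-t ^ 2 / 2) = Real.sqrt (2 * π) := by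
    rw [show (2 * π) = π / (1/2) by ring, ← h]
    congr 1 with t; ring_nf
  rw [integral_div, h2, div_self]
  positivity

lemma gauss_tail (x : ℝ) :
    1 - stdNormalCDF x = ∫ t in Ioi x, Real.exp (-t ^ 2 / 2) / Real.sqrt (2 * Real.pi) := by
  have := intervalIntegral.integral_Iic_add_Ioi (μ := volume) (b := x)
    (f := fun t : ℝ => Real.exp (-t ^ 2 / 2) / Real.sqrt (2 * Real.pi))
    gauss_integrable.integrableOn gauss_integrable.integrableOn
  rw [gauss_total] at this
  unfold stdNormalCDF
  linarith

lemma aux_integrable {x : ℝ} (hx : 0 < x) :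
    IntegrableOn (fun u : ℝ => Real.exp (-u - u ^ 2 / (2 * x ^ 2)) / Real.sqrt (2 * Real.pi))
      (Ioi 0) := by
  have hbase : IntegrableOn (fun u : ℝ => Real.exp (-1 * u) / Real.sqrt (2 * Real.pi)) (Ioi 0) :=
    (exp_neg_integrableOn_Ioi 0 one_pos).div_const _
  refine hbase.mono' ?_ ?_
  · apply Measurable.aestronglyMeasurable
    fun_prop
  · filter_upwards with u
    rw [Real.norm_eq_abs, abs_div, abs_of_nonneg (Real.exp_pos _).le,
      abs_of_nonneg (Real.sqrt_nonneg _)]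
    apply div_le_div_of_nonneg_right _ (by positivity)
    · apply Real.exp_le_exp.2
      have h0 : 0 ≤ u ^ 2 / (2 * x ^ 2) := by positivity
      linarith

lemma repr_eq {x : ℝ} (hx : 0 < x) :
    x * Real.exp (x ^ 2 / 2) * (1 - stdNormalCDF x)
      = ∫ u in Ioi (0:ℝ), Real.exp (-u - u ^ 2 / (2 * x ^ 2)) / Real.sqrt (2 * Real.pi) := by
  rw [gauss_tail, ← integral_const_mul]
  -- shift t = s + x
  have hshift : (∫ t in Ioi x, x * Real.exp (x ^ 2 / 2) * (Real.exp (-t ^ 2 / 2) / Real.sqrt (2 * Real.pi)))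
      = ∫ s in Ioi (0:ℝ), x * Real.exp (x ^ 2 / 2) * (Real.exp (-(s + x) ^ 2 / 2) / Real.sqrt (2 * Real.pi)) := by
    have hmp : MeasurePreserving (fun s : ℝ => s + x) volume volume :=
      measurePreserving_add_right volume x
    have hme : MeasurableEmbedding (fun s : ℝ => s + x) :=
      (MeasurableEquiv.addRight x).measurableEmbedding
    have := hmp.setIntegral_preimage_emb hme
      (fun t => x * Real.exp (x ^ 2 / 2) * (Real.exp (-t ^ 2 / 2) / Real.sqrt (2 * Real.pi))) (Ioi x)
    rw [← this]
    congr 1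
    ext s
    simp [lt_add_iff_pos_left]
  rw [hshift]
  -- simplify integrand, then scale s = u / x
  have hsimp : ∀ s : ℝ, x * Real.exp (x ^ 2 / 2) * (Real.exp (-(s + x) ^ 2 / 2) / Real.sqrt (2 * Real.pi))
      = x * (Real.exp (-(x * s) - (x * s) ^ 2 / (2 * x ^ 2)) / Real.sqrt (2 * Real.pi)) := by
    intro s
    have h1 : Real.exp (x ^ 2 / 2) * Real.exp (-(s + x) ^ 2 / 2)
        = Real.exp (-(x * s) - (x * s) ^ 2 / (2 * x ^ 2)) := by
      rw [← Real.exp_add]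
      congr 1
      field_simp
      ring
    calc x * Real.exp (x ^ 2 / 2) * (Real.exp (-(s + x) ^ 2 / 2) / Real.sqrt (2 * Real.pi))
        = x * ((Real.exp (x ^ 2 / 2) * Real.exp (-(s + x) ^ 2 / 2)) / Real.sqrt (2 * Real.pi)) := by ring
      _ = _ := by rw [h1]
  simp_rw [hsimp]
  rw [integral_const_mul]
  have := MeasureTheory.integral_comp_mul_left_Ioi
    (fun u : ℝ => Real.exp (-u - u ^ 2 / (2 * x ^ 2)) / Real.sqrt (2 * Real.pi)) 0 hx
  rw [mul_zero] at this
  rw [this, smul_eq_mul, ← mul_assoc, mul_inv_cancel₀ hx.ne', one_mul]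

/-- The function `x ↦ x e^{x²/2} (1 - Φ(x))` is increasing on `(0, ∞)`. -/
theorem xexp_mul_gaussTail_strictMonoOn :
    StrictMonoOn (fun x : ℝ => x * Real.exp (x ^ 2 / 2) * (1 - stdNormalCDF x))
      (Set.Ioi (0 : ℝ)) := by
  intro a ha b hb hab
  simp only [Set.mem_Ioi] at ha hb
  simp only
  rw [repr_eq ha, repr_eq hb, ← sub_pos, ← integral_sub (aux_integrable hb) (aux_integrable ha)]
  set g := fun u : ℝ => Real.exp (-u - u ^ 2 / (2 * b ^ 2)) / Real.sqrt (2 * Real.pi)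
    - Real.exp (-u - u ^ 2 / (2 * a ^ 2)) / Real.sqrt (2 * Real.pi) with hg
  have hpos : ∀ u : ℝ, 0 < u → 0 < g u := by
    intro u hu
    have : Real.exp (-u - u ^ 2 / (2 * a ^ 2)) < Real.exp (-u - u ^ 2 / (2 * b ^ 2)) := by
      apply Real.exp_lt_exp.2
      have h1 : u ^ 2 / (2 * b ^ 2) < u ^ 2 / (2 * a ^ 2) := by
        apply div_lt_div_of_pos_left (by positivity) (by positivity)
        nlinarith
      linarith
    have hsq : 0 < Real.sqrt (2 * Real.pi) := by positivity
    simp only [hg]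
    rw [sub_pos]
    exact div_lt_div_of_pos_right this hsq
  rw [setIntegral_pos_iff_support_of_nonneg_ae]
  · refine lt_of_lt_of_le ?_ (measure_mono (show Ioi (1:ℝ) ⊆ Function.support g ∩ Ioi 0 from ?_))
    · simp [Real.volume_Ioi]
    · intro u hu
      exact ⟨(hpos u (lt_trans one_pos hu)).ne', mem_Ioi.2 (lt_trans one_pos hu)⟩
  · filter_upwards [ae_restrict_mem measurableSet_Ioi] with u hu
    exact (hpos u hu).le
  · exact (aux_integrable hb).sub (aux_integrable ha)
end

section
/- Let Z, Z' be independent standard Gaussian random variables. For every ρ ∈ [0,1] and x > 0, with θ = √((1-ρ)/(1+ρ)), one has Φ̄(θx) ≤ P(ρZ + √(1-ρ²) Z' > x | Z > x) ≤ (1+ρ) Φ̄(θx). -/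
open MeasureTheory ProbabilityTheory Real

/-- The standard normal tail probability `Φ̄(x) = P(Z > x)`. -/
noncomputable def gaussTail (x : ℝ) : ℝ :=
  ((gaussianReal 0 1) (Set.Ioi x)).toReal

open Set

section Aux

noncomputable def g (t : ℝ) : ℝ := (Real.sqrt (2 * π))⁻¹ * Real.exp (-t^2/2)

lemma g_eq : gaussianPDFReal 0 1 = g := by
  funext t
  simp [gaussianPDFReal, g]

lemma g_pos (t : ℝ) : 0 < g t := by
  rw [g]; positivity

lemma g_nonneg (t : ℝ) : 0 ≤ g t := (g_pos t).le

lemma g_cont : Continuous g := by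
  unfold g
  fun_prop

lemma g_integrable : Integrable g := by
  rw [← g_eq]; exact integrable_gaussianPDFReal 0 1

lemma g_even (t : ℝ) : g (-t) = g t := by simp [g]

lemma integral_g : ∫ t, g t = 1 := by
  rw [← g_eq]; exact integral_gaussianPDFReal_eq_one 0 one_ne_zero

lemma gaussTail_eq (y : ℝ) : gaussTail y = ∫ t in Ioi y, g t := by
  rw [gaussTail, gaussianReal_apply_eq_integral 0 one_ne_zero, g_eq,
    ENNReal.toReal_ofReal (setIntegral_nonneg measurableSet_Ioi fun t _ => g_nonneg t)]

lemma g_intOn (s : Set ℝ) : IntegrableOn g s := g_integrable.integrableOn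

lemma gaussTail_nonneg (y : ℝ) : 0 ≤ gaussTail y := ENNReal.toReal_nonneg

lemma gaussTail_le_one (y : ℝ) : gaussTail y ≤ 1 := by
  rw [gaussTail]
  exact ENNReal.toReal_le_of_le_ofReal one_pos.le (by simpa using prob_le_one)

lemma gaussTail_pos (y : ℝ) : 0 < gaussTail y := by
  rw [gaussTail_eq]
  apply setIntegral_pos_iff_support_of_nonneg_ae (Filter.Eventually.of_forall fun t => g_nonneg t)
    (g_intOn _) |>.mpr
  have : Function.support g = Set.univ := by
    ext t; simp [Function.support, (g_pos t).ne']
  rw [this, Set.univ_inter]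
  simp [Real.volume_Ioi]

lemma gaussTail_anti : Antitone gaussTail := by
  intro a b hab
  rw [gaussTail_eq, gaussTail_eq]
  apply setIntegral_mono_set (g_intOn _) (Filter.Eventually.of_forall fun t => g_nonneg t)
  exact HasSubset.Subset.eventuallyLE (Ioi_subset_Ioi hab)

lemma gaussTail_split {a b : ℝ} (hab : a ≤ b) :
    gaussTail a = (∫ t in Ioc a b, g t) + gaussTail b := by
  rw [gaussTail_eq, gaussTail_eq, ← Ioc_union_Ioi_eq_Ioi hab,
    setIntegral_union (Ioc_disjoint_Ioi le_rfl) measurableSet_Ioi (g_intOn _) (g_intOn _)]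

lemma gaussTail_Iic (c : ℝ) : ∫ t in Iic (-c), g t = gaussTail c := by
  rw [gaussTail_eq]
  rw [show (∫ t in Iic (-c), g t) = ∫ t in Iic (-c), g (-t) from by simp_rw [g_even]]
  rw [integral_comp_neg_Iic, neg_neg]

lemma gaussTail_zero : gaussTail 0 = 1/2 := by
  have h := integral_add_compl (measurableSet_Iic (a := (0:ℝ))) g_integrable
  rw [compl_Iic] at h
  have h2 := gaussTail_Iic 0
  rw [neg_zero] at h2
  rw [integral_g, h2, ← gaussTail_eq] at h
  linarith

lemma integral_shift_Ioi (f : ℝ → ℝ) (a d : ℝ) :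
    ∫ t in Ioi a, f (t + d) = ∫ t in Ioi (a + d), f t := by
  have : ∀ t : ℝ, (Ioi a).indicator (fun t => f (t + d)) t
      = (Ioi (a + d)).indicator f (t + d) := by
    intro t
    by_cases h : t ∈ Ioi a
    · rw [Set.indicator_of_mem h, Set.indicator_of_mem (by simpa using h)]
    · rw [Set.indicator_of_notMem h, Set.indicator_of_notMem (by simpa using h)]
  rw [← integral_indicator measurableSet_Ioi, ← integral_indicator measurableSet_Ioi]
  simp_rw [this]
  exact integral_add_right_eq_self ((Ioi (a + d)).indicator f) d

lemma integral_affine_Iic (f : ℝ → ℝ) (c b : ℝ) {r : ℝ} (hr : 0 < r) :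
    ∫ t in Iic c, f ((t - b) / r) = r * ∫ w in Iic ((c - b) / r), f w := by
  set F := (Iic ((c - b) / r)).indicator f with hF
  have key : ∀ t : ℝ, (Iic c).indicator (fun t => f ((t - b) / r)) t = F ((t - b) / r) := by
    intro t
    by_cases h : t ∈ Iic c
    · rw [Set.indicator_of_mem h, hF, Set.indicator_of_mem]
      rw [mem_Iic] at h ⊢
      gcongr
    · rw [Set.indicator_of_notMem h, hF, Set.indicator_of_notMem]
      intro hc
      have h3 := mul_le_mul_of_nonneg_right (hc : (t-b)/r ≤ (c-b)/r) hr.le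
      rw [div_mul_cancel₀ _ hr.ne', div_mul_cancel₀ _ hr.ne'] at h3
      exact h (by simpa using sub_le_sub_right h3 (-b))
  rw [← integral_indicator measurableSet_Iic, ← integral_indicator measurableSet_Iic]
  simp_rw [key]
  have h2 : ∫ t : ℝ, F ((t - b) / r) = ∫ u : ℝ, F (u / r) :=
    integral_sub_right_eq_self (fun u => F (u / r)) b
  rw [h2, Measure.integral_comp_div F r, abs_of_pos hr, smul_eq_mul]

lemma mills {x y : ℝ} (hxy : x ≤ y) :
    gaussTail y * g x ≤ gaussTail x * g y := by
  have hshift : gaussTail y = ∫ t in Ioi x, g (t + (y - x)) := by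
    rw [integral_shift_Ioi g x (y - x), gaussTail_eq]
    ring_nf
  have hpt : ∀ t ∈ Ioi x, g (t + (y - x)) * g x ≤ g t * g y := by
    intro t ht
    rw [mem_Ioi] at ht
    unfold g
    have hmm : ∀ a b : ℝ, ((Real.sqrt (2*π))⁻¹ * Real.exp a) * ((Real.sqrt (2*π))⁻¹ * Real.exp b) = ((Real.sqrt (2*π))⁻¹)^2 * Real.exp (a+b) := by
      intro a b; rw [Real.exp_add]; ring
    rw [hmm, hmm]
    apply mul_le_mul_of_nonneg_left _ (by positivity)
    apply Real.exp_le_exp.mpr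
    nlinarith
  calc gaussTail y * g x = ∫ t in Ioi x, g (t + (y - x)) * g x := by
        rw [hshift, ← integral_mul_const]
    _ ≤ ∫ t in Ioi x, g t * g y := by
        apply setIntegral_mono_on _ _ measurableSet_Ioi hpt
        · have : Integrable (fun t => g (t + (y-x)) * g x) := by
            apply Integrable.mul_const
            have := g_integrable
            exact this.comp_add_right (y - x)
          exact this.integrableOn
        · exact (g_integrable.mul_const _).integrableOn
    _ = gaussTail x * g y := by rw [integral_mul_const, ← gaussTail_eq]

lemma g_identity {ρ s : ℝ} (hρ : ρ ≠ 0) (hs : s^2 + ρ^2 = 1) (x t : ℝ) :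
    g t * g ((x - t*s)/ρ) = g x * g ((t - x*s)/ρ) := by
  unfold g
  have hmm : ∀ a b : ℝ, ((Real.sqrt (2*π))⁻¹ * Real.exp a) * ((Real.sqrt (2*π))⁻¹ * Real.exp b) = ((Real.sqrt (2*π))⁻¹)^2 * Real.exp (a+b) := by
    intro a b; rw [Real.exp_add]; ring
  rw [hmm, hmm]
  congr 1
  have h2 : ((x - t*s)/ρ)^2 = (x - t*s)^2 / ρ^2 := by rw [div_pow]
  have h3 : ((t - x*s)/ρ)^2 = (t - x*s)^2 / ρ^2 := by rw [div_pow]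
  rw [h2, h3]
  have hρ2 : ρ^2 ≠ 0 := pow_ne_zero 2 hρ
  congr 1
  have e : (-t^2/2 + -((x - t*s)^2/ρ^2)/2) - (-x^2/2 + -((t - x*s)^2/ρ^2)/2)
      = (x^2-t^2)*(s^2+ρ^2-1)/(2*ρ^2) := by field_simp; ring
  rw [hs, sub_self, mul_zero, zero_div] at e
  linarith

section Core
variable {ρ x θ s : ℝ}

lemma tail_affine_meas (a b c : ℝ) :
    Measurable fun z : ℝ => gaussTail ((a - b*z)/c) := by
  apply Measurable.comp (Antitone.measurable gaussTail_anti)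
  fun_prop

lemma tail_affine_meas' (a b c : ℝ) :
    Measurable fun z : ℝ => gaussTail ((a - z*b)/c) := by
  simp_rw [mul_comm]
  exact tail_affine_meas a b c

lemma core_int :
    IntegrableOn (fun z => gaussTail ((x - ρ*z)/s) * g z) (Ioi x) := by
  apply Integrable.integrableOn
  apply Integrable.mono' g_integrable
  · exact ((tail_affine_meas x ρ s).mul g_cont.measurable).aestronglyMeasurable
  · refine Filter.Eventually.of_forall fun z => ?_
    rw [norm_mul, Real.norm_of_nonneg (gaussTail_nonneg _), Real.norm_of_nonneg (g_nonneg _)]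
    calc gaussTail ((x - ρ*z)/s) * g z ≤ 1 * g z :=
          mul_le_mul_of_nonneg_right (gaussTail_le_one _) (g_nonneg _)
      _ = g z := one_mul _

lemma core_lower (hρ0 : 0 ≤ ρ) (hs : 0 < s) (hθ : θ * s = 1 - ρ) (hx : 0 < x) :
    gaussTail (θ*x) * gaussTail x ≤ ∫ z in Ioi x, gaussTail ((x - ρ*z)/s) * g z := by
  have hpt : ∀ z ∈ Ioi x, gaussTail (θ*x) * g z ≤ gaussTail ((x - ρ*z)/s) * g z := by
    intro z hz
    rw [mem_Ioi] at hz
    apply mul_le_mul_of_nonneg_right _ (g_nonneg _)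
    apply gaussTail_anti
    rw [div_le_iff₀ hs]
    nlinarith
  calc gaussTail (θ*x) * gaussTail x = ∫ z in Ioi x, gaussTail (θ*x) * g z := by
        rw [gaussTail_eq x, ← integral_const_mul]
    _ ≤ ∫ z in Ioi x, gaussTail ((x - ρ*z)/s) * g z :=
        setIntegral_mono_on ((g_integrable.const_mul _).integrableOn)
          (core_int) measurableSet_Ioi hpt

lemma core_upper (hρ0 : 0 < ρ) (hx : 0 < x) (hs : 0 < s) (hθ0 : 0 < θ)
    (hθs : θ * s = 1 - ρ) (hs2 : s^2 + ρ^2 = 1) (hθρ : θ * (1+ρ) = s) :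
    ∫ z in Ioi x, gaussTail ((x - ρ*z)/s) * g z
      ≤ (1+ρ) * gaussTail (θ*x) * gaussTail x := by
  have hρ1 : ρ < 1 := by nlinarith
  set S : Set (ℝ×ℝ) := {p : ℝ×ℝ | x < p.1 ∧ (x - ρ*p.1)/s < p.2 ∧ p.2 ≤ θ*x} with hS
  have hSmeas : MeasurableSet S := by
    apply MeasurableSet.inter (measurableSet_lt measurable_const measurable_fst)
    apply MeasurableSet.inter
    · exact measurableSet_lt (by fun_prop) measurable_snd
    · exact measurableSet_le measurable_snd measurable_const
  set F : ℝ×ℝ → ℝ := S.indicator (fun p => g p.1 * g p.2) with hF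
  have hFint : Integrable F (volume.prod volume) :=
    (g_integrable.mul_prod g_integrable).indicator hSmeas
  -- A side
  have hAin : ∀ z : ℝ, (∫ t, F (z, t))
      = (Ioi x).indicator (fun z => (gaussTail ((x - ρ*z)/s) - gaussTail (θ*x)) * g z) z := by
    intro z
    by_cases hz : z ∈ Ioi x
    · rw [Set.indicator_of_mem hz]
      rw [mem_Ioi] at hz
      have h1 : (fun t => F (z, t))
          = fun t => (Ioc ((x - ρ*z)/s) (θ*x)).indicator (fun t => g z * g t) t := by
        funext t
        by_cases ht : t ∈ Ioc ((x - ρ*z)/s) (θ*x)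
        · rw [Set.indicator_of_mem ht, hF, Set.indicator_of_mem]
          exact ⟨hz, ht.1, ht.2⟩
        · rw [Set.indicator_of_notMem ht, hF, Set.indicator_of_notMem]
          intro hmem
          exact ht ⟨hmem.2.1, hmem.2.2⟩
      have hab : (x - ρ*z)/s ≤ θ*x := by
        rw [div_le_iff₀ hs]
        nlinarith
      rw [h1, integral_indicator measurableSet_Ioc, integral_const_mul]
      have h2 := gaussTail_split hab
      have : ∫ t in Ioc ((x - ρ*z)/s) (θ*x), g t
          = gaussTail ((x - ρ*z)/s) - gaussTail (θ*x) := by linarith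
      rw [this]; ring
    · rw [Set.indicator_of_notMem hz]
      have h1 : (fun t => F (z, t)) = fun _ => (0:ℝ) := by
        funext t
        rw [hF, Set.indicator_of_notMem]
        intro hmem
        exact hz hmem.1
      rw [h1, integral_zero]
  -- B side
  have hBin : ∀ t : ℝ, (∫ z, F (z, t))
      = (Iic (θ*x)).indicator (fun t => gaussTail ((x - t*s)/ρ) * g t) t := by
    intro t
    by_cases ht : t ∈ Iic (θ*x)
    · rw [Set.indicator_of_mem ht]
      rw [mem_Iic] at ht
      have hxle : x ≤ (x - t*s)/ρ := by
        rw [le_div_iff₀ hρ0]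
        nlinarith
      have h1 : (fun z => F (z, t))
          = fun z => (Ioi ((x - t*s)/ρ)).indicator (fun z => g z * g t) z := by
        funext z
        by_cases hzz : z ∈ Ioi ((x - t*s)/ρ)
        · rw [Set.indicator_of_mem hzz, hF, Set.indicator_of_mem]
          rw [mem_Ioi, div_lt_iff₀ hρ0] at hzz
          refine ⟨?_, ?_, ht⟩
          · rcases lt_or_ge x z with h | h
            · exact h
            · nlinarith
          · rw [div_lt_iff₀ hs]; nlinarith
        · rw [Set.indicator_of_notMem hzz, hF, Set.indicator_of_notMem]
          intro hmem
          obtain ⟨hm1, hm2, _⟩ := hmem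
          rw [div_lt_iff₀ hs] at hm2
          apply hzz
          rw [mem_Ioi, div_lt_iff₀ hρ0]
          nlinarith
      rw [h1, integral_indicator measurableSet_Ioi, integral_mul_const, ← gaussTail_eq]
    · rw [Set.indicator_of_notMem ht]
      have h1 : (fun z => F (z, t)) = fun _ => (0:ℝ) := by
        funext z
        rw [hF, Set.indicator_of_notMem]
        intro hmem
        exact ht hmem.2.2
      rw [h1, integral_zero]
  -- Fubini
  have hswap : ∫ z in Ioi x, (gaussTail ((x - ρ*z)/s) - gaussTail (θ*x)) * g z
      = ∫ t in Iic (θ*x), gaussTail ((x - t*s)/ρ) * g t := by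
    have h := MeasureTheory.integral_integral_swap (f := fun z t => F (z, t))
      (μ := (volume : Measure ℝ)) (ν := (volume : Measure ℝ)) hFint
    simp_rw [hAin, hBin] at h
    rwa [integral_indicator measurableSet_Ioi, integral_indicator measurableSet_Iic] at h
  -- bound the B side
  have hmono : ∫ t in Iic (θ*x), gaussTail ((x - t*s)/ρ) * g t
      ≤ ∫ t in Iic (θ*x), gaussTail x * g ((t - x*s)/ρ) := by
    apply setIntegral_mono_on
    · apply Integrable.integrableOn
      apply Integrable.mono' g_integrable
      · exact ((tail_affine_meas' x s ρ).mul g_cont.measurable).aestronglyMeasurable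
      · refine Filter.Eventually.of_forall fun t => ?_
        rw [norm_mul, Real.norm_of_nonneg (gaussTail_nonneg _), Real.norm_of_nonneg (g_nonneg _)]
        calc gaussTail ((x - t*s)/ρ) * g t ≤ 1 * g t :=
              mul_le_mul_of_nonneg_right (gaussTail_le_one _) (g_nonneg _)
          _ = g t := one_mul _
    · exact (((g_integrable.comp_div hρ0.ne').comp_sub_right (x*s)).const_mul _).integrableOn
    · exact measurableSet_Iic
    · intro t ht
      rw [mem_Iic] at ht
      have hxle : x ≤ (x - t*s)/ρ := by
        rw [le_div_iff₀ hρ0]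
        nlinarith
      have hm := mills hxle
      have hkey := g_identity hρ0.ne' hs2 x t
      have hgx := g_pos x
      have hgt := g_nonneg t
      calc gaussTail ((x - t*s)/ρ) * g t
          ≤ (gaussTail x * g ((x - t*s)/ρ) / g x) * g t := by
            apply mul_le_mul_of_nonneg_right _ hgt
            rw [le_div_iff₀ hgx]
            exact hm
        _ = gaussTail x * g ((t - x*s)/ρ) := by
            field_simp
            linear_combination gaussTail x * hkey
  -- compute the final integral
  have hsub : ∫ t in Iic (θ*x), gaussTail x * g ((t - x*s)/ρ)
      = ρ * gaussTail x * gaussTail (θ*x) := by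
    rw [integral_const_mul, integral_affine_Iic g (θ*x) (x*s) hρ0]
    have harg : (θ*x - x*s)/ρ = -(θ*x) := by
      rw [div_eq_iff hρ0.ne']
      nlinarith
    rw [harg, gaussTail_Iic]
    ring
  -- assemble
  have hI : ∫ z in Ioi x, gaussTail ((x - ρ*z)/s) * g z
      = gaussTail (θ*x) * gaussTail x
        + ∫ z in Ioi x, (gaussTail ((x - ρ*z)/s) - gaussTail (θ*x)) * g z := by
    have hsplit : ∫ z in Ioi x, (gaussTail ((x - ρ*z)/s) - gaussTail (θ*x)) * g z
        = (∫ z in Ioi x, gaussTail ((x - ρ*z)/s) * g z)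
          - ∫ z in Ioi x, gaussTail (θ*x) * g z := by
      rw [← integral_sub (core_int) ((g_integrable.const_mul _).integrableOn)]
      congr 1
      funext z
      ring
    have hconst : ∫ z in Ioi x, gaussTail (θ*x) * g z = gaussTail (θ*x) * gaussTail x := by
      rw [gaussTail_eq x, ← integral_const_mul]
    linarith
  rw [hI, hswap]
  have := gaussTail_nonneg (θ*x)
  have := gaussTail_nonneg x
  nlinarith [hmono.trans (le_of_eq hsub)]

end Core

lemma gReal_Ioi (y : ℝ) :
    gaussianReal 0 1 (Ioi y) = ENNReal.ofReal (gaussTail y) := by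
  rw [gaussTail]
  exact (ENNReal.ofReal_toReal (measure_ne_top _ _)).symm

lemma prod_measure_eq {ρ s x : ℝ} (hs : 0 < s) :
    ((gaussianReal 0 1).prod (gaussianReal 0 1))
        {p : ℝ×ℝ | x < ρ*p.1 + s*p.2 ∧ x < p.1}
      = ENNReal.ofReal (∫ z in Ioi x, gaussTail ((x - ρ*z)/s) * g z) := by
  set S₂ : Set (ℝ×ℝ) := {p : ℝ×ℝ | x < ρ*p.1 + s*p.2 ∧ x < p.1} with hS₂
  have hmble : Measurable fun p : ℝ×ℝ => ρ*p.1 + s*p.2 := by fun_prop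
  have hmeas : MeasurableSet S₂ :=
    (measurableSet_lt measurable_const hmble).inter
      (measurableSet_lt measurable_const measurable_fst)
  rw [Measure.prod_apply hmeas]
  have hslice : ∀ z : ℝ, gaussianReal 0 1 (Prod.mk z ⁻¹' S₂)
      = (Ioi x).indicator (fun z => ENNReal.ofReal (gaussTail ((x - ρ*z)/s))) z := by
    intro z
    by_cases hz : z ∈ Ioi x
    · rw [Set.indicator_of_mem hz]
      have : Prod.mk z ⁻¹' S₂ = Ioi ((x - ρ*z)/s) := by
        ext z'
        simp only [hS₂, mem_preimage, mem_setOf_eq, mem_Ioi]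
        rw [mem_Ioi] at hz
        constructor
        · rintro ⟨h1, _⟩
          rw [div_lt_iff₀ hs]
          nlinarith
        · intro h
          rw [div_lt_iff₀ hs] at h
          exact ⟨by nlinarith, hz⟩
      rw [this, gReal_Ioi]
    · rw [Set.indicator_of_notMem hz]
      have : Prod.mk z ⁻¹' S₂ = ∅ := by
        ext z'
        simp only [hS₂, mem_preimage, mem_setOf_eq, mem_empty_iff_false, iff_false]
        rintro ⟨_, h2⟩
        exact hz h2
      rw [this, measure_empty]
  simp_rw [hslice]
  rw [lintegral_indicator measurableSet_Ioi]
  rw [gaussianReal_of_var_ne_zero 0 one_ne_zero, restrict_withDensity measurableSet_Ioi,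
    lintegral_withDensity_eq_lintegral_mul _ (measurable_gaussianPDF 0 1)
      (by exact ((tail_affine_meas x ρ s).ennreal_ofReal))]
  have hpt : ∀ z : ℝ, (gaussianPDF 0 1 * fun z => ENNReal.ofReal (gaussTail ((x - ρ*z)/s))) z
      = ENNReal.ofReal (gaussTail ((x - ρ*z)/s) * g z) := by
    intro z
    simp only [Pi.mul_apply, gaussianPDF, g_eq]
    rw [← ENNReal.ofReal_mul (g_nonneg z), mul_comm]
  simp_rw [hpt]
  rw [← ofReal_integral_eq_lintegral_ofReal]
  · exact core_int
  · exact Filter.Eventually.of_forall fun z => mul_nonneg (gaussTail_nonneg _) (g_nonneg _)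

end Aux

/-- For independent standard Gaussians `Z, Z'`, `ρ ∈ [0,1]`, `x > 0` and
`θ = √((1-ρ)/(1+ρ))`, we have
`Φ̄(θx) ≤ P(ρZ + √(1-ρ²) Z' > x ∣ Z > x) ≤ (1+ρ) Φ̄(θx)`. -/
theorem bivariate_gaussian_conditional_tail
    {Ω : Type*} [MeasurableSpace Ω] (P : Measure Ω) [IsProbabilityMeasure P]
    (Z Z' : Ω → ℝ)
    (hZ : Measure.map Z P = gaussianReal 0 1)
    (hZ' : Measure.map Z' P = gaussianReal 0 1)
    (hind : IndepFun Z Z' P)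
    (ρ : ℝ) (hρ : ρ ∈ Set.Icc (0 : ℝ) 1) (x : ℝ) (hx : 0 < x)
    (θ : ℝ) (hθ : θ = Real.sqrt ((1 - ρ) / (1 + ρ))) :
    gaussTail (θ * x)
      ≤ ((P[|{ω | x < Z ω}]) {ω | x < ρ * Z ω + Real.sqrt (1 - ρ ^ 2) * Z' ω}).toReal ∧
    ((P[|{ω | x < Z ω}]) {ω | x < ρ * Z ω + Real.sqrt (1 - ρ ^ 2) * Z' ω}).toReal
      ≤ (1 + ρ) * gaussTail (θ * x) := by
  obtain ⟨hρ0, hρ1⟩ := hρ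
  have hZae : AEMeasurable Z P := by
    by_contra h
    have h0 := Measure.map_of_not_aemeasurable h
    rw [hZ] at h0
    have : (gaussianReal 0 1) Set.univ = 1 := measure_univ
    rw [h0] at this
    simp at this
  have hZ'ae : AEMeasurable Z' P := by
    by_contra h
    have h0 := Measure.map_of_not_aemeasurable h
    rw [hZ'] at h0
    have : (gaussianReal 0 1) Set.univ = 1 := measure_univ
    rw [h0] at this
    simp at this
  have hB : NullMeasurableSet {ω | x < Z ω} P :=
    hZae.nullMeasurable measurableSet_Ioi
  have hPB : P {ω | x < Z ω} = ENNReal.ofReal (gaussTail x) := by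
    have he : {ω | x < Z ω} = Z ⁻¹' (Ioi x) := rfl
    rw [he, ← Measure.map_apply₀ hZae measurableSet_Ioi.nullMeasurableSet, hZ, gReal_Ioi]
  have hcond : ∀ A : Set Ω, (P[|{ω | x < Z ω}]) A
      = (P {ω | x < Z ω})⁻¹ * P (A ∩ {ω | x < Z ω}) := by
    intro A
    rw [ProbabilityTheory.cond, Measure.smul_apply, smul_eq_mul,
      Measure.restrict_apply₀' hB]
  by_cases hρeq : ρ = 1
  · subst hρeq
    have hs0 : Real.sqrt (1 - (1:ℝ)^2) = 0 := by norm_num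
    have hAeq : {ω | x < 1 * Z ω + Real.sqrt (1-(1:ℝ)^2) * Z' ω} = {ω | x < Z ω} := by
      ext ω
      rw [hs0]
      simp
    rw [hAeq]
    have hone : (P[|{ω | x < Z ω}]) {ω | x < Z ω} = 1 := by
      rw [hcond, Set.inter_self, hPB,
        ENNReal.inv_mul_cancel (ENNReal.ofReal_pos.mpr (gaussTail_pos x)).ne'
          ENNReal.ofReal_ne_top]
    rw [hone]
    have hθ0 : θ = 0 := by rw [hθ]; norm_num
    rw [hθ0, zero_mul, gaussTail_zero]
    norm_num
  · have hρlt : ρ < 1 := lt_of_le_of_ne hρ1 hρeq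
    set s' := Real.sqrt (1 - ρ^2) with hs'
    have h1ρ2 : (0:ℝ) < 1 - ρ^2 := by nlinarith
    have hs : 0 < s' := Real.sqrt_pos.mpr h1ρ2
    have hs2 : s'^2 + ρ^2 = 1 := by rw [hs', Real.sq_sqrt h1ρ2.le]; ring
    have hdivpos : (0:ℝ) < (1 - ρ)/(1 + ρ) := div_pos (by linarith) (by linarith)
    have hθ0 : 0 < θ := by rw [hθ]; exact Real.sqrt_pos.mpr hdivpos
    have hθs : θ * s' = 1 - ρ := by
      rw [hθ, hs', ← Real.sqrt_mul hdivpos.le,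
        show (1-ρ)/(1+ρ) * (1-ρ^2) = (1-ρ)^2 by field_simp; ring]
      exact Real.sqrt_sq (by linarith)
    have hθρ : θ * (1+ρ) = s' := by
      have h2 : θ*(1+ρ)*s' = s'*s' := by linear_combination (1+ρ)*hθs - hs2
      exact mul_right_cancel₀ hs.ne' h2
    have hmble : Measurable fun p : ℝ×ℝ => ρ*p.1 + s'*p.2 := by fun_prop
    have hS₂meas : MeasurableSet {p : ℝ×ℝ | x < ρ*p.1 + s'*p.2 ∧ x < p.1} :=
      (measurableSet_lt measurable_const hmble).inter
        (measurableSet_lt measurable_const measurable_fst)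
    have hpair : Measure.map (fun ω => (Z ω, Z' ω)) P
        = (gaussianReal 0 1).prod (gaussianReal 0 1) := by
      have h := (indepFun_iff_map_prod_eq_prod_map_map hZae hZ'ae).mp hind
      rw [hZ, hZ'] at h
      exact h
    have hA : {ω | x < ρ * Z ω + s' * Z' ω} ∩ {ω | x < Z ω}
        = (fun ω => (Z ω, Z' ω)) ⁻¹' {p : ℝ×ℝ | x < ρ*p.1 + s'*p.2 ∧ x < p.1} := rfl
    have hPAB : P ({ω | x < ρ * Z ω + s' * Z' ω} ∩ {ω | x < Z ω})
        = ENNReal.ofReal (∫ z in Ioi x, gaussTail ((x - ρ*z)/s') * g z) := by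
      rw [hA, ← Measure.map_apply₀ (hZae.prodMk hZ'ae) hS₂meas.nullMeasurableSet, hpair,
        prod_measure_eq hs]
    set I := ∫ z in Ioi x, gaussTail ((x - ρ*z)/s') * g z with hI
    have hInn : 0 ≤ I :=
      setIntegral_nonneg measurableSet_Ioi fun z _ =>
        mul_nonneg (gaussTail_nonneg _) (g_nonneg _)
    have hval : ((P[|{ω | x < Z ω}]) {ω | x < ρ * Z ω + s' * Z' ω}).toReal
        = I / gaussTail x := by
      rw [hcond, hPB, hPAB, ENNReal.toReal_mul, ENNReal.toReal_inv,
        ENNReal.toReal_ofReal (gaussTail_nonneg x), ENNReal.toReal_ofReal hInn,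
        inv_mul_eq_div]
    rw [hval]
    constructor
    · rw [le_div_iff₀ (gaussTail_pos x)]
      have := core_lower (θ := θ) hρ0 hs hθs hx
      linarith
    · rw [div_le_iff₀ (gaussTail_pos x)]
      by_cases hρ0' : ρ = 0
      · subst hρ0'
        have hs1 : s' = 1 := by rw [hs']; norm_num
        have hθ1 : θ = 1 := by
          have := hθs
          rw [hs1] at this
          linarith
        have hIeq : I = gaussTail x * gaussTail x := by
          rw [hI]
          have : ∀ z : ℝ, gaussTail ((x - 0*z)/s') * g z = gaussTail x * g z := by
            intro z
            rw [hs1]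
            norm_num
          simp_rw [this]
          rw [gaussTail_eq x, ← integral_const_mul]
        rw [hIeq, hθ1, one_mul]
        nlinarith [gaussTail_pos x]
      · have hρpos : 0 < ρ := lt_of_le_of_ne hρ0 (Ne.symm hρ0')
        have := core_upper hρpos hx hs hθ0 hθs hs2 hθρ
        linarith
end
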